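/- Lower bound for the ground state energy (Theorem 3.1): for all k > max{|r_min|,|r_max|}/2, λ_0(V_k, α) ≥ (1/2 - a_{k,1}) λ_0(V_{k+r_min}, ∞δ_0) + (1/2 - a_{k,2}) λ_0(V_{k-r_max}, ∞δ_0), where a_{k,1} = 1/2 - Σ_{j=-k}^{r_min} |φ_k(j) - φ_k(r_min)|² and a_{k,2} = 1/2 - Σ_{j=r_max}^{k} |φ_k(j) - φ_k(r_max)|². -/

import Mathlib

open Finset Filter Topology Matrix

/-- The (Neumann) discrete Laplacian matrix of the path graph with `n` vertices. -/
noncomputable def pathLap (n : ℕ) : Matrix (Fin n) (Fin n) ℝ :=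
  Matrix.of fun i j =>
    if i = j then (if i.val = 0 ∨ i.val = n - 1 then (1 : ℝ) else 2)
    else if i.val + 1 = j.val ∨ j.val + 1 = i.val then -1 else 0

/-- The diagonal potential matrix: vertex `i` of `Fin (2k+1)` represents the integer `i - k`. -/
noncomputable def potMat (k : ℕ) (α : ℤ → ℝ) : Matrix (Fin (2*k+1)) (Fin (2*k+1)) ℝ :=
  Matrix.diagonal fun i => α ((i : ℤ) - k)

/-- The discrete Schrödinger operator `H_{k,α} = L_k + Σ_j α_j δ_j` on the path `{-k,…,k}`. -/
noncomputable def Hmat (k : ℕ) (α : ℤ → ℝ) : Matrix (Fin (2*k+1)) (Fin (2*k+1)) ℝ :=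
  pathLap (2*k+1) + potMat k α

/-- The set of eigenvalues of a real matrix. -/
def evs {n : ℕ} (M : Matrix (Fin n) (Fin n) ℝ) : Set ℝ :=
  {μ | ∃ f : Fin n → ℝ, f ≠ 0 ∧ M.mulVec f = μ • f}

/-- Lowest eigenvalue. -/
noncomputable def lam0 {n : ℕ} (M : Matrix (Fin n) (Fin n) ℝ) : ℝ := sInf (evs M)

/-- Second-lowest eigenvalue (lowest eigenvalue above the ground state energy). -/
noncomputable def lam1 {n : ℕ} (M : Matrix (Fin n) (Fin n) ℝ) : ℝ :=
  sInf (evs M \ {lam0 M})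

/-- Spectral gap. -/
noncomputable def gap {n : ℕ} (M : Matrix (Fin n) (Fin n) ℝ) : ℝ := lam1 M - lam0 M

/-- `λ_0(V_m, ∞δ_0) = 2 - 2cos(π/(2m+1))`, the Dirichlet ground state energy. -/
noncomputable def dirEVZ (m : ℤ) : ℝ := 2 - 2 * Real.cos (Real.pi / (2 * m + 1))

/-- Index of the integer vertex `j ∈ {-k,…,k}` inside `Fin (2k+1)`. -/
def idx (k : ℕ) (j : ℤ) : Fin (2*k+1) := ⟨(j + k).toNat % (2*k+1), Nat.mod_lt _ (by omega)⟩

/-- `φ` is the normalized strictly positive ground state of `H_{k,α}`. -/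
noncomputable def isGS (k : ℕ) (α : ℤ → ℝ) (φ : Fin (2*k+1) → ℝ) : Prop :=
  (Hmat k α).mulVec φ = lam0 (Hmat k α) • φ ∧ (∑ i, φ i ^ 2 = 1) ∧ ∀ i, 0 < φ i

/-- The single-site potential `α δ_0`. -/
noncomputable def single0 (α : ℝ) : ℤ → ℝ := fun j => if j = 0 then α else 0

lemma pathLap_mulVec (n : ℕ) (f : Fin n → ℝ) (j : Fin n) :
    (pathLap n).mulVec f j =
      (if j.val = 0 ∨ j.val = n - 1 then 1 else 2) * f j
        - (if h : 0 < j.val then f ⟨j.val - 1, by omega⟩ else 0)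
        - (if h : j.val + 1 < n then f ⟨j.val + 1, h⟩ else 0) := by
  unfold pathLap Matrix.mulVec dotProduct
  simp only [Matrix.of_apply]
  have key : ∀ i : Fin n,
      (if j = i then (if j.val = 0 ∨ j.val = n - 1 then (1:ℝ) else 2)
        else if j.val + 1 = i.val ∨ i.val + 1 = j.val then -1 else 0) * f i =
      (if i = j then (if j.val = 0 ∨ j.val = n - 1 then (1:ℝ) else 2) * f j else 0)
      + (if 0 < j.val ∧ i.val = j.val - 1 then -f i else 0)
      + (if j.val + 1 < n ∧ i.val = j.val + 1 then -f i else 0) := by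
    intro i
    have hiLt := i.isLt
    rcases eq_or_ne i j with rfl | hij
    · have h2 : ¬(0 < i.val ∧ i.val = i.val - 1) := by omega
      have h3 : ¬(i.val + 1 < n ∧ i.val = i.val + 1) := by omega
      rw [if_neg h2, if_neg h3, if_pos rfl, if_pos rfl]; ring
    · have hv : i.val ≠ j.val := fun h => hij (Fin.ext h)
      rw [if_neg (fun h : j = i => hij h.symm), if_neg hij]
      by_cases h1 : j.val + 1 = i.val
      · have e1 : (0 < j.val ∧ i.val = j.val - 1) = False := by
          simp only [eq_iff_iff, iff_false]; omega
        have e2 : (j.val + 1 < n ∧ i.val = j.val + 1) = True := by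
          simp only [eq_iff_iff, iff_true]; omega
        simp only [e1, e2, if_true, if_false, if_pos (Or.inl h1)]; ring
      · by_cases h2 : i.val + 1 = j.val
        · have e1 : (0 < j.val ∧ i.val = j.val - 1) = True := by
            simp only [eq_iff_iff, iff_true]; omega
          have e2 : (j.val + 1 < n ∧ i.val = j.val + 1) = False := by
            simp only [eq_iff_iff, iff_false]; omega
          simp only [e1, e2, if_true, if_false, if_pos (Or.inr h2)]; ring
        · have e1 : (0 < j.val ∧ i.val = j.val - 1) = False := by
            simp only [eq_iff_iff, iff_false]; omega
          have e2 : (j.val + 1 < n ∧ i.val = j.val + 1) = False := by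
            simp only [eq_iff_iff, iff_false]; omega
          simp only [e1, e2, if_false]
          rw [if_neg (by omega : ¬(j.val + 1 = i.val ∨ i.val + 1 = j.val))]; ring
  rw [Finset.sum_congr rfl (fun i _ => key i), Finset.sum_add_distrib, Finset.sum_add_distrib]
  have S1 : (∑ i : Fin n, if i = j then (if j.val = 0 ∨ j.val = n - 1 then (1:ℝ) else 2) * f j else 0)
      = (if j.val = 0 ∨ j.val = n - 1 then (1:ℝ) else 2) * f j := by
    rw [Finset.sum_ite_eq' Finset.univ j]; simp
  have S2 : (∑ i : Fin n, if 0 < j.val ∧ i.val = j.val - 1 then -f i else 0)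
      = -(if h : 0 < j.val then f ⟨j.val - 1, by omega⟩ else 0) := by
    by_cases h : 0 < j.val
    · rw [dif_pos h, Finset.sum_eq_single (⟨j.val - 1, by omega⟩ : Fin n)]
      · rw [if_pos ⟨h, rfl⟩]
      · intro b _ hb
        rw [if_neg]; rintro ⟨-, hb'⟩; exact hb (Fin.ext hb')
      · simp
    · rw [dif_neg h, neg_zero]
      apply Finset.sum_eq_zero; intro b _
      rw [if_neg]; rintro ⟨h', -⟩; exact h h'
  have S3 : (∑ i : Fin n, if j.val + 1 < n ∧ i.val = j.val + 1 then -f i else 0)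
      = -(if h : j.val + 1 < n then f ⟨j.val + 1, h⟩ else 0) := by
    by_cases h : j.val + 1 < n
    · rw [dif_pos h, Finset.sum_eq_single (⟨j.val + 1, h⟩ : Fin n)]
      · rw [if_pos ⟨h, rfl⟩]
      · intro b _ hb
        rw [if_neg]; rintro ⟨-, hb'⟩; exact hb (Fin.ext hb')
      · simp
    · rw [dif_neg h, neg_zero]
      apply Finset.sum_eq_zero; intro b _
      rw [if_neg]; rintro ⟨h', -⟩; exact h h'
  rw [S1, S2, S3]; ring

lemma quad_nat (F : ℕ → ℝ) : ∀ n, 2 ≤ n →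
    ∑ i ∈ Finset.range n, (F i * ((if i = 0 ∨ i = n-1 then 1 else 2) * F i
      - (if 0 < i then F (i-1) else 0) - (if i+1 < n then F (i+1) else 0)))
    = ∑ i ∈ Finset.range (n-1), (F (i+1) - F i)^2 := by
  intro n
  induction n with
  | zero => omega
  | succ n ih =>
    intro hn
    rcases Nat.lt_or_ge n 2 with h2 | h2
    · -- n+1 = 2, i.e. n = 1
      have hn1 : n = 1 := by omega
      subst hn1
      norm_num [Finset.sum_range_succ]
      ring
    · -- n ≥ 2
      have key : ∀ i ∈ Finset.range n,
          (F i * ((if i = 0 ∨ i = (n+1)-1 then 1 else 2) * F i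
            - (if 0 < i then F (i-1) else 0) - (if i+1 < n+1 then F (i+1) else 0)))
          = (F i * ((if i = 0 ∨ i = n-1 then 1 else 2) * F i
            - (if 0 < i then F (i-1) else 0) - (if i+1 < n then F (i+1) else 0)))
            + (if i = n-1 then F i^2 - F i * F n else 0) := by
        intro i hi
        rw [Finset.mem_range] at hi
        by_cases hi1 : i = n-1
        · subst hi1
          have c1 : ((n-1 : ℕ) = 0 ∨ (n-1:ℕ) = (n+1)-1) = False := by
            simp only [eq_iff_iff, iff_false]; omega
          have c3 : ((n-1 : ℕ)+1 < n+1) = True := by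
            simp only [eq_iff_iff, iff_true]; omega
          have c4 : ((n-1 : ℕ)+1 < n) = False := by
            simp only [eq_iff_iff, iff_false]; omega
          have c5 : (0 < n-1) = True := by
            simp only [eq_iff_iff, iff_true]; omega
          have hfn : F (n-1+1) = F n := by congr 1; omega
          simp only [c1, c3, c4, c5, eq_self_iff_true, or_true, if_true, if_false, hfn]
          ring
        · have c1 : (i = 0 ∨ i = (n+1)-1) = (i = 0 ∨ i = n-1) := by
            simp only [eq_iff_iff]; omega
          have c3 : (i+1 < n+1) = True := by
            simp only [eq_iff_iff, iff_true]; omega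
          have c4 : (i+1 < n) = True := by
            simp only [eq_iff_iff, iff_true]; omega
          simp only [c1, c3, c4, if_true, if_neg hi1]
          ring
      rw [Finset.sum_range_succ, Finset.sum_congr rfl key, Finset.sum_add_distrib,
        ih h2]
      have e1 : (∑ i ∈ Finset.range n, if i = n-1 then F i^2 - F i * F n else 0)
          = F (n-1)^2 - F (n-1) * F n := by
        rw [Finset.sum_ite_eq' (Finset.range n) (n-1) (fun i => F i^2 - F i * F n)]
        rw [if_pos (Finset.mem_range.mpr (by omega))]
      rw [e1]
      have c1 : (n = 0 ∨ n = (n+1)-1) = True := by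
        simp only [eq_iff_iff, iff_true]; omega
      have c2 : (0 < n) = True := by simp only [eq_iff_iff, iff_true]; omega
      have c3 : (n+1 < n+1) = False := by simp only [eq_iff_iff, iff_false]; omega
      simp only [c1, c2, c3, if_true, if_false]
      have : (n+1)-1 = (n-1)+1 := by omega
      rw [this, Finset.sum_range_succ]
      have hfn : F ((n-1)+1) = F n := by congr 1; omega
      rw [hfn]
      ring

lemma pathLap_quadform (n : ℕ) (hn : 2 ≤ n) (f : Fin n → ℝ) (F : ℕ → ℝ)
    (hF : ∀ i (h : i < n), F i = f ⟨i, h⟩) :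
    f ⬝ᵥ (pathLap n).mulVec f = ∑ i ∈ Finset.range (n-1), (F (i+1) - F i)^2 := by
  rw [← quad_nat F n hn]
  unfold dotProduct
  rw [← Fin.sum_univ_eq_sum_range (fun i => (F i * ((if i = 0 ∨ i = n-1 then 1 else 2) * F i
      - (if 0 < i then F (i-1) else 0) - (if i+1 < n then F (i+1) else 0)))) n]
  apply Finset.sum_congr rfl
  intro j _
  have hfj : f j = F j.val := by rw [hF j.val j.isLt, Fin.eta]
  have e1 : (if h : 0 < j.val then f ⟨j.val - 1, by omega⟩ else 0)
      = (if 0 < j.val then F (j.val - 1) else 0) := by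
    by_cases h : 0 < j.val
    · rw [dif_pos h, if_pos h, hF (j.val - 1) (by omega)]
    · rw [dif_neg h, if_neg h]
  have e2 : (if h : j.val + 1 < n then f ⟨j.val + 1, h⟩ else 0)
      = (if j.val + 1 < n then F (j.val + 1) else 0) := by
    by_cases h : j.val + 1 < n
    · rw [dif_pos h, if_pos h, hF (j.val + 1) h]
    · rw [dif_neg h, if_neg h]
  rw [pathLap_mulVec n f j, e1, e2, hfj]

lemma poincare (m : ℕ) (ψ : ℕ → ℝ) (h0 : ψ m = 0) :
    dirEVZ m * ∑ i ∈ Finset.range m, ψ i ^ 2 ≤ ∑ i ∈ Finset.range m, (ψ (i+1) - ψ i)^2 := by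
  rcases Nat.eq_zero_or_pos m with rfl | hm
  · simp
  rcases eq_or_lt_of_le (show 1 ≤ m from hm) with hm1 | hm2
  · -- m = 1
    rw [← hm1] at h0 ⊢
    have hd : dirEVZ ((1:ℕ) : ℤ) = 1 := by
      unfold dirEVZ
      have : ((2:ℝ) * (((1:ℕ):ℤ):ℝ) + 1) = 3 := by push_cast; norm_num
      rw [this]
      rw [show Real.pi / 3 = Real.pi / 3 from rfl, Real.cos_pi_div_three]
      norm_num
    rw [hd, one_mul]
    simp only [Finset.sum_range_one, Finset.sum_range_succ, Finset.sum_range_zero,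
      zero_add] at *
    rw [h0]
    nlinarith [sq_nonneg (ψ 0)]
  -- main case m ≥ 2
  have hmR : (2:ℝ) ≤ m := by exact_mod_cast hm2
  set u : ℝ := Real.pi / (2 * (2 * m + 1)) with hu_def
  have hden : (0:ℝ) < 2 * m + 1 := by positivity
  have hu : 0 < u := by apply div_pos Real.pi_pos; positivity
  have hhalf : ((2:ℝ) * m + 1) * u = Real.pi / 2 := by
    rw [hu_def]; field_simp
  set w : ℕ → ℝ := fun i => Real.cos ((2 * i + 1) * u) with hw_def
  set L : ℝ := 2 - 2 * Real.cos (2 * u) with hL_def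
  have hdir : dirEVZ (m : ℕ) = L := by
    unfold dirEVZ
    have h2u : Real.pi / (2 * (((m:ℕ):ℤ):ℝ) + 1) = 2 * u := by
      rw [hu_def]; push_cast; field_simp
    rw [h2u]
  have wpos : ∀ i : ℕ, i < m → 0 < w i := by
    intro i hi
    apply Real.cos_pos_of_mem_Ioo
    constructor
    · have h1 : 0 < (2 * (i:ℝ) + 1) * u := by positivity
      have := Real.pi_pos
      linarith
    · rw [← hhalf]
      apply mul_lt_mul_of_pos_right _ hu
      have : (i:ℝ) + 1 ≤ m := by exact_mod_cast hi
      linarith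
  have wzero : w m = 0 := by
    simp only [hw_def]
    rw [hhalf, Real.cos_pi_div_two]
  have recur : ∀ i : ℕ, w i + w (i+2) = 2 * Real.cos (2*u) * w (i+1) := by
    intro i
    simp only [hw_def]
    rw [Real.cos_add_cos]
    push_cast
    have e1 : ((2 * (i:ℝ) + 1) * u + (2 * ((i:ℝ) + 2) + 1) * u) / 2
        = (2 * ((i:ℝ)+1) + 1) * u := by ring
    have e2 : ((2 * (i:ℝ) + 1) * u - (2 * ((i:ℝ) + 2) + 1) * u) / 2 = -(2*u) := by ring
    rw [e1, e2, Real.cos_neg]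
    ring
  have base : w 0 + w 1 = 2 * Real.cos (2*u) * w 0 := by
    have base' : Real.cos u + Real.cos (3*u) = 2 * Real.cos (2*u) * Real.cos u := by
      rw [Real.cos_add_cos, show (u+3*u)/2 = 2*u by ring, show (u-3*u)/2 = -u by ring,
        Real.cos_neg]
    have e0 : w 0 = Real.cos u := by simp only [hw_def]; norm_num
    have e1 : w 1 = Real.cos (3*u) := by simp only [hw_def]; norm_num
    rw [e0, e1]; exact base'
  set b : ℕ → ℝ := fun i => if i = 0 then 0 else 1 - w (i-1) / w i with hb_def
  have hbi : ∀ i : ℕ, i ≤ m - 1 → w i * (L - b i) = w i - w (i+1) := by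
    intro i hi
    rcases Nat.eq_zero_or_pos i with rfl | hipos
    · simp only [hb_def, if_pos rfl, hL_def]
      have hb1 : w 1 = 2 * Real.cos (2*u) * w 0 - w 0 := by linarith [base]
      rw [hb1]; ring
    · have hwi : w i ≠ 0 := ne_of_gt (wpos i (by omega))
      simp only [hb_def, if_neg (Nat.pos_iff_ne_zero.mp hipos)]
      have hrec := recur (i-1)
      have e1 : i - 1 + 2 = i + 1 := by omega
      have e2 : i - 1 + 1 = i := by omega
      rw [e1, e2] at hrec
      rw [hL_def]
      field_simp
      linear_combination hrec
  have hbm : b (m-1) = L - 1 := by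
    have h1 := hbi (m-1) le_rfl
    have e1 : m - 1 + 1 = m := by omega
    rw [e1, wzero, sub_zero] at h1
    have hwm1 : w (m-1) ≠ 0 := ne_of_gt (wpos (m-1) (by omega))
    have : L - b (m-1) = 1 := mul_left_cancel₀ hwm1 (h1.trans (mul_one _).symm)
    linarith
  -- edge identity
  have edge : ∀ i : ℕ, i + 1 ≤ m - 1 →
      (ψ (i+1) - ψ i)^2 = (w i * ψ (i+1) - w (i+1) * ψ i)^2 / (w i * w (i+1))
        + (L - b i) * ψ i ^ 2 + (b (i+1) * ψ (i+1)^2 - b i * ψ i ^ 2) + b i * ψ i ^ 2 := by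
    intro i hi
    have ha : 0 < w i := wpos i (by omega)
    have hc : 0 < w (i+1) := wpos (i+1) (by omega)
    have hLb : L - b i = 1 - w (i+1) / w i := by
      have h1 := hbi i (by omega)
      field_simp
      linear_combination h1
    have hbs : b (i+1) = 1 - w i / w (i+1) := by
      simp only [hb_def, if_neg (Nat.succ_ne_zero i)]
      norm_num
    rw [hLb, hbs]
    field_simp
    ring
  -- summation
  have hsplit : ∑ i ∈ Finset.range m, (ψ (i+1) - ψ i)^2
      = ∑ i ∈ Finset.range (m-1), (ψ (i+1) - ψ i)^2 + ψ (m-1) ^ 2 := by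
    have e1 : m - 1 + 1 = m := by omega
    calc ∑ i ∈ Finset.range m, (ψ (i+1) - ψ i)^2
        = ∑ i ∈ Finset.range ((m-1)+1), (ψ (i+1) - ψ i)^2 := by rw [e1]
      _ = ∑ i ∈ Finset.range (m-1), (ψ (i+1) - ψ i)^2 + (ψ ((m-1)+1) - ψ (m-1))^2 :=
          Finset.sum_range_succ _ _
      _ = ∑ i ∈ Finset.range (m-1), (ψ (i+1) - ψ i)^2 + ψ (m-1) ^ 2 := by
          rw [e1, h0]; ring
  have key : ∑ i ∈ Finset.range (m-1), (ψ (i+1) - ψ i)^2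
      ≥ L * ∑ i ∈ Finset.range (m-1), ψ i ^ 2 + (L - 1) * ψ (m-1)^2 := by
    have expand : ∀ i ∈ Finset.range (m-1), (ψ (i+1) - ψ i)^2
        = (w i * ψ (i+1) - w (i+1) * ψ i)^2 / (w i * w (i+1))
          + L * ψ i ^ 2 + (b (i+1) * ψ (i+1)^2 - b i * ψ i ^ 2) := by
      intro i hi
      rw [Finset.mem_range] at hi
      have := edge i (by omega)
      linarith [this]
    rw [Finset.sum_congr rfl expand, Finset.sum_add_distrib, Finset.sum_add_distrib,
      Finset.sum_range_sub (fun i => b i * ψ i ^ 2), ← Finset.mul_sum]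
    have hb0 : b 0 * ψ 0 ^ 2 = 0 := by simp [hb_def]
    rw [hb0, sub_zero, hbm]
    have tnn : (0:ℝ) ≤ ∑ i ∈ Finset.range (m-1),
        (w i * ψ (i+1) - w (i+1) * ψ i)^2 / (w i * w (i+1)) := by
      apply Finset.sum_nonneg
      intro i hi
      rw [Finset.mem_range] at hi
      have ha : 0 < w i := wpos i (by omega)
      have hc : 0 < w (i+1) := wpos (i+1) (by omega)
      positivity
    linarith
  have hfinal : ∑ i ∈ Finset.range m, ψ i ^ 2
      = ∑ i ∈ Finset.range (m-1), ψ i ^ 2 + ψ (m-1) ^ 2 := by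
    have e1 : m - 1 + 1 = m := by omega
    calc ∑ i ∈ Finset.range m, ψ i ^ 2
        = ∑ i ∈ Finset.range ((m-1)+1), ψ i ^ 2 := by rw [e1]
      _ = ∑ i ∈ Finset.range (m-1), ψ i ^ 2 + ψ (m-1) ^ 2 := Finset.sum_range_succ _ _
  rw [hdir, hsplit, hfinal]
  linarith [key]

lemma sum_Icc_int (f : ℤ → ℝ) (a : ℤ) (N : ℕ) :
    ∑ j ∈ Finset.Icc a (a + N), f j = ∑ i ∈ Finset.range (N+1), f (a + i) := by
  induction N with
  | zero => simp
  | succ N ih =>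
    have h1 : a + (N+1 : ℕ) = (a + N) + 1 := by push_cast; ring
    have h2 : Finset.Icc a ((a+N)+1) = insert ((a+N)+1) (Finset.Icc a (a+N)) := by
      ext x; simp only [Finset.mem_Icc, Finset.mem_insert]; omega
    rw [h1, h2, Finset.sum_insert (by simp), ih]
    conv_rhs => rw [Finset.sum_range_succ]
    push_cast
    ring

lemma pathLap_symm (n : ℕ) (i j : Fin n) : pathLap n i j = pathLap n j i := by
  unfold pathLap
  simp only [Matrix.of_apply]
  rcases eq_or_ne i j with rfl | h
  · rfl
  · rw [if_neg h, if_neg (Ne.symm h)]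
    exact if_congr or_comm rfl rfl

lemma pathLap_rowsum (n : ℕ) (hn : 3 ≤ n) (j : Fin n) :
    (pathLap n).mulVec (fun _ => (1:ℝ)) j = 0 := by
  rw [pathLap_mulVec]
  have hj := j.isLt
  by_cases h0 : j.val = 0
  · rw [if_pos (Or.inl h0), dif_neg (by omega), dif_pos (by omega)]; norm_num
  · by_cases h1 : j.val = n - 1
    · rw [if_pos (Or.inr h1), dif_pos (by omega), dif_neg (by omega)]; norm_num
    · rw [if_neg (by omega : ¬(j.val = 0 ∨ j.val = n - 1)), dif_pos (by omega),
        dif_pos (by omega)]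
      norm_num

lemma pathLap_sum_mulVec (n : ℕ) (hn : 3 ≤ n) (f : Fin n → ℝ) :
    ∑ j, (pathLap n).mulVec f j = 0 := by
  have expand : ∑ j, (pathLap n).mulVec f j = ∑ j, ∑ i, pathLap n j i * f i := rfl
  rw [expand, Finset.sum_comm]
  apply Finset.sum_eq_zero
  intro i _
  have e1 : ∑ j, pathLap n j i * f i = (∑ j, pathLap n i j * (1:ℝ)) * f i := by
    rw [Finset.sum_mul]
    apply Finset.sum_congr rfl
    intro j _
    rw [mul_one, pathLap_symm]
  rw [e1]
  have e2 : (∑ j, pathLap n i j * (1:ℝ)) = (pathLap n).mulVec (fun _ => (1:ℝ)) i := rfl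
  rw [e2, pathLap_rowsum n hn i, zero_mul]

/-- lower bound for the ground state energy, Theorem 3.1: for all
`k > max{|r_min|, |r_max|}/2`,
`λ_0(V_k, α) ≥ (1/2 - a_{k,1}) λ_0(V_{k+r_min}, ∞δ_0) + (1/2 - a_{k,2}) λ_0(V_{k-r_max}, ∞δ_0)`,
where `a_{k,1} = 1/2 - Σ_{j=-k}^{r_min} |φ_k(j) - φ_k(r_min)|²` and
`a_{k,2} = 1/2 - Σ_{j=r_max}^{k} |φ_k(j) - φ_k(r_max)|²`. -/
theorem stmt12 (α : ℤ → ℝ) (J : Finset ℤ) (hne : J.Nonempty)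
    (hsupp : ∀ j : ℤ, α j ≠ 0 ↔ j ∈ J) (hpos : ∀ j ∈ J, 0 < α j)
    (rmin rmax : ℤ) (hrmin : rmin = J.min' hne) (hrmax : rmax = J.max' hne)
    (k : ℕ) (hk : max |rmin| |rmax| < 2 * (k : ℤ))
    (φ : Fin (2*k+1) → ℝ) (hφ : isGS k α φ) :
    (1/2 - (1/2 - ∑ j ∈ Finset.Icc (-(k : ℤ)) rmin, (φ (idx k j) - φ (idx k rmin)) ^ 2)) *
        dirEVZ ((k : ℤ) + rmin) +
      (1/2 - (1/2 - ∑ j ∈ Finset.Icc rmax (k : ℤ), (φ (idx k j) - φ (idx k rmax)) ^ 2)) *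
        dirEVZ ((k : ℤ) - rmax) ≤ lam0 (Hmat k α) := by
  obtain ⟨heig, hnorm, hposφ⟩ := hφ
  set lam := lam0 (Hmat k α) with hlam_def
  -- basic bounds
  have hb1 : |rmin| < 2 * (k:ℤ) := lt_of_le_of_lt (le_max_left _ _) hk
  have hb2 : |rmax| < 2 * (k:ℤ) := lt_of_le_of_lt (le_max_right _ _) hk
  have hrm1 : -(2*(k:ℤ)) < rmin ∧ rmin < 2*(k:ℤ) := abs_lt.mp hb1
  have hrm2 : -(2*(k:ℤ)) < rmax ∧ rmax < 2*(k:ℤ) := abs_lt.mp hb2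
  have hk1 : 1 ≤ k := by
    by_contra h
    have : k = 0 := by omega
    subst this
    simp at hb1
    exact absurd hb1 (not_lt.mpr (abs_nonneg rmin))
  have hminmax : rmin ≤ rmax := by
    rw [hrmin, hrmax]; exact J.min'_le (J.max' hne) (J.max'_mem hne)
  have hαnn : ∀ j : ℤ, 0 ≤ α j := by
    intro j
    by_cases h : α j = 0
    · exact h.ge
    · exact (hpos j ((hsupp j).mp h)).le
  -- the ℕ-indexed wave function
  set G : ℕ → ℝ := fun i => φ ⟨i % (2*k+1), Nat.mod_lt _ (by omega)⟩ with hG_def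
  have hG : ∀ (i : ℕ) (h : i < 2*k+1), G i = φ ⟨i, h⟩ := by
    intro i h
    simp only [hG_def]
    congr 1
    exact Fin.ext (Nat.mod_eq_of_lt h)
  have hidx : ∀ j : ℤ, φ (idx k j) = G ((j + k).toNat) := by
    intro j
    simp only [hG_def]
    rfl
  -- energy decomposition
  set h : ℕ → ℝ := fun i => (G (i+1) - G i)^2 with hh_def
  set E : ℝ := ∑ i ∈ Finset.range (2*k), h i with hE_def
  set pot : ℝ := φ ⬝ᵥ (potMat k α).mulVec φ with hpot_def
  have hpotval : pot = ∑ i : Fin (2*k+1), φ i * (α ((i:ℤ) - k) * φ i) := by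
    rw [hpot_def]
    unfold dotProduct potMat
    apply Finset.sum_congr rfl
    intro i _
    rw [Matrix.mulVec_diagonal]
  have hpotnn : 0 ≤ pot := by
    rw [hpotval]
    apply Finset.sum_nonneg
    intro i _
    exact mul_nonneg (hposφ i).le (mul_nonneg (hαnn _) (hposφ i).le)
  have hEnn : 0 ≤ E := by
    rw [hE_def]
    apply Finset.sum_nonneg
    intro i _
    positivity
  have hEP : E + pot = lam := by
    have hquad : φ ⬝ᵥ (pathLap (2*k+1)).mulVec φ = E := by
      have := pathLap_quadform (2*k+1) (by omega) φ G hG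
      rw [this, hE_def, hh_def, show 2*k+1-1 = 2*k from rfl]
    have hdot : φ ⬝ᵥ (Hmat k α).mulVec φ = lam := by
      rw [heig]
      have e1 : φ ⬝ᵥ (lam • φ) = lam * ∑ i, φ i ^ 2 := by
        unfold dotProduct
        rw [Finset.mul_sum]
        apply Finset.sum_congr rfl
        intro i _
        simp only [Pi.smul_apply, smul_eq_mul]
        ring
      rw [e1, hnorm, mul_one]
    have hsplit : φ ⬝ᵥ (Hmat k α).mulVec φ = φ ⬝ᵥ (pathLap (2*k+1)).mulVec φ + pot := by
      rw [hpot_def]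
      unfold Hmat
      rw [Matrix.add_mulVec, dotProduct_add]
    rw [← hdot, hsplit, hquad]
  by_cases hdeg : (k:ℤ) < rmin ∨ rmax < -(k:ℤ)
  · -- potential is invisible: φ is constant and lam = 0
    have hαz : ∀ i : Fin (2*k+1), α ((i:ℤ) - k) = 0 := by
      intro i
      by_contra hne0
      have hmem := (hsupp _).mp hne0
      have hlo : rmin ≤ (i:ℤ) - k := hrmin ▸ J.min'_le _ hmem
      have hhi : (i:ℤ) - k ≤ rmax := hrmax ▸ J.le_max' _ hmem
      have hiZ : ((i:ℕ):ℤ) ≤ 2*k := by exact_mod_cast Nat.lt_succ_iff.mp i.isLt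
      have hiZ0 : (0:ℤ) ≤ ((i:ℕ):ℤ) := Int.ofNat_nonneg _
      rcases hdeg with hcase | hcase
      · omega
      · omega
    have hpot0 : pot = 0 := by
      rw [hpotval]
      apply Finset.sum_eq_zero
      intro i _
      rw [hαz i]
      ring
    have hpots : ∑ j, (potMat k α).mulVec φ j = 0 := by
      apply Finset.sum_eq_zero
      intro i _
      unfold potMat
      rw [Matrix.mulVec_diagonal, hαz i, zero_mul]
    have hsum0 : ∑ j, (Hmat k α).mulVec φ j = 0 := by
      unfold Hmat
      have e1 : ∀ j, (pathLap (2*k+1) + potMat k α).mulVec φ j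
          = (pathLap (2*k+1)).mulVec φ j + (potMat k α).mulVec φ j := by
        intro j
        rw [Matrix.add_mulVec]
        rfl
      rw [Finset.sum_congr rfl (fun j _ => e1 j), Finset.sum_add_distrib,
        pathLap_sum_mulVec (2*k+1) (by omega) φ, hpots, add_zero]
    have hlam0 : lam = 0 := by
      have h1 : ∑ j, (Hmat k α).mulVec φ j = lam * ∑ j, φ j := by
        rw [heig]
        simp only [Pi.smul_apply, smul_eq_mul]
        rw [Finset.mul_sum]
      have hφsum : 0 < ∑ j, φ j :=
        Finset.sum_pos (fun i _ => hposφ i) ⟨⟨0, by omega⟩, Finset.mem_univ _⟩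
      have h2 := hsum0
      rw [h1] at h2
      rcases mul_eq_zero.mp h2 with h' | h'
      · exact h'
      · linarith
    have hE0 : E = 0 := by linarith
    have hGstep : ∀ i ∈ Finset.range (2*k), h i = 0 := by
      have hnn : ∀ j ∈ Finset.range (2*k), 0 ≤ h j := by
        intro j _
        simp only [hh_def]
        positivity
      exact (Finset.sum_eq_zero_iff_of_nonneg hnn).mp (hE_def.symm.trans hE0)
    have hGc : ∀ i, i ≤ 2*k → G i = G 0 := by
      intro i
      induction i with
      | zero => intro _; rfl
      | succ m ihm =>
        intro hm
        have h0 : h m = 0 := hGstep m (Finset.mem_range.mpr (by omega))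
        simp only [hh_def] at h0
        have h1 : G (m+1) - G m = 0 := by
          have := pow_eq_zero_iff (n := 2) (by norm_num) |>.mp h0
          exact this
        have h2 : G (m+1) = G m := by linarith
        rw [h2, ihm (by omega)]
    have hGall : ∀ x, G x = G 0 := by
      intro x
      have e1 : G x = G (x % (2*k+1)) := by
        simp only [hG_def]
        congr 1
        exact Fin.ext (Nat.mod_eq_of_lt (Nat.mod_lt _ (by omega))).symm
      rw [e1]
      have := Nat.mod_lt x (show 0 < 2*k+1 by omega)
      exact hGc _ (by omega)
    have hS1 : ∑ j ∈ Finset.Icc (-(k : ℤ)) rmin, (φ (idx k j) - φ (idx k rmin)) ^ 2 = 0 := by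
      apply Finset.sum_eq_zero
      intro j _
      rw [hidx, hidx, hGall ((j + (k:ℤ)).toNat), hGall ((rmin + (k:ℤ)).toNat)]
      ring
    have hS2 : ∑ j ∈ Finset.Icc rmax (k : ℤ), (φ (idx k j) - φ (idx k rmax)) ^ 2 = 0 := by
      apply Finset.sum_eq_zero
      intro j _
      rw [hidx, hidx, hGall ((j + (k:ℤ)).toNat), hGall ((rmax + (k:ℤ)).toNat)]
      ring
    rw [hS1, hS2]
    simp only [sub_zero, sub_self, zero_mul, add_zero]
    exact hlam0.ge
  · push_neg at hdeg
    obtain ⟨hrmk, hrmk2⟩ := hdeg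
    set m1 := (rmin + (k:ℤ)).toNat with hm1_def
    set p := (rmax + (k:ℤ)).toNat with hp_def
    set m2 := ((k:ℤ) - rmax).toNat with hm2_def
    have bound1 : (∑ j ∈ Finset.Icc (-(k : ℤ)) rmin, (φ (idx k j) - φ (idx k rmin)) ^ 2) *
        dirEVZ ((k : ℤ) + rmin) ≤ ∑ i ∈ Finset.range m1, h i := by
      by_cases hcL : -(k:ℤ) ≤ rmin
      · have hm1Z : (m1:ℤ) = rmin + k := Int.toNat_of_nonneg (by omega)
        set ψ1 : ℕ → ℝ := fun i => G (min i m1) - G m1 with hψ1_def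
        have h0ψ1 : ψ1 m1 = 0 := by
          simp only [hψ1_def, min_self, sub_self]
        have hp1 := poincare m1 ψ1 h0ψ1
        have hmass : ∑ j ∈ Finset.Icc (-(k : ℤ)) rmin, (φ (idx k j) - φ (idx k rmin)) ^ 2
            = ∑ i ∈ Finset.range m1, ψ1 i ^ 2 := by
          have e0 : rmin = -(k:ℤ) + m1 := by omega
          rw [e0, sum_Icc_int (fun j => (φ (idx k j) - φ (idx k (-(k:ℤ) + m1))) ^ 2) (-(k:ℤ)) m1]
          have e1 : ∀ i ∈ Finset.range (m1+1),
              (φ (idx k (-(k:ℤ) + i)) - φ (idx k (-(k:ℤ) + m1))) ^ 2 = (G i - G m1)^2 := by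
            intro i _
            rw [hidx, hidx,
              show (-(k:ℤ) + (i:ℤ) + (k:ℤ)).toNat = i from by omega,
              show (-(k:ℤ) + (m1:ℤ) + (k:ℤ)).toNat = m1 from by omega]
          rw [Finset.sum_congr rfl e1, Finset.sum_range_succ]
          have e2 : ∀ i ∈ Finset.range m1, (G i - G m1)^2 = ψ1 i ^ 2 := by
            intro i hi
            rw [Finset.mem_range] at hi
            simp only [hψ1_def, min_eq_left (le_of_lt hi)]
          rw [Finset.sum_congr rfl e2, sub_self]
          ring
        have hedge : ∑ i ∈ Finset.range m1, (ψ1 (i+1) - ψ1 i)^2 = ∑ i ∈ Finset.range m1, h i := by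
          apply Finset.sum_congr rfl
          intro i hi
          rw [Finset.mem_range] at hi
          simp only [hψ1_def, hh_def, min_eq_left (le_of_lt hi),
            min_eq_left (Nat.succ_le_of_lt hi)]
          ring
        have hdEq : dirEVZ ((k:ℤ) + rmin) = dirEVZ ((m1:ℕ) : ℤ) := by
          congr 1
          omega
        rw [hmass, hdEq, mul_comm]
        calc dirEVZ ((m1:ℕ):ℤ) * ∑ i ∈ Finset.range m1, ψ1 i ^ 2
            ≤ ∑ i ∈ Finset.range m1, (ψ1 (i+1) - ψ1 i)^2 := hp1
          _ = ∑ i ∈ Finset.range m1, h i := hedge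
      · have hempty : Finset.Icc (-(k : ℤ)) rmin = ∅ := Finset.Icc_eq_empty (by omega)
        rw [hempty, Finset.sum_empty, zero_mul]
        apply Finset.sum_nonneg
        intro i _
        simp only [hh_def]
        positivity
    have bound2 : (∑ j ∈ Finset.Icc rmax (k : ℤ), (φ (idx k j) - φ (idx k rmax)) ^ 2) *
        dirEVZ ((k : ℤ) - rmax) ≤ ∑ i ∈ Finset.range m2, h (p + i) := by
      by_cases hcR : rmax ≤ (k:ℤ)
      · have hm2Z : (m2:ℤ) = (k:ℤ) - rmax := Int.toNat_of_nonneg (by omega)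
        have hpZ : (p:ℤ) = rmax + k := Int.toNat_of_nonneg (by omega)
        set ψ2 : ℕ → ℝ := fun i => G (p + m2 - min i m2) - G p with hψ2_def
        have h0ψ2 : ψ2 m2 = 0 := by
          simp only [hψ2_def, min_self]
          rw [show p + m2 - m2 = p from by omega, sub_self]
        have hp2 := poincare m2 ψ2 h0ψ2
        have hmass : ∑ j ∈ Finset.Icc rmax (k:ℤ), (φ (idx k j) - φ (idx k rmax)) ^ 2
            = ∑ i ∈ Finset.range m2, ψ2 i ^ 2 := by
          have e0 : (k:ℤ) = rmax + m2 := by omega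
          rw [e0, sum_Icc_int (fun j => (φ (idx k j) - φ (idx k rmax)) ^ 2) rmax m2]
          have e1 : ∀ i ∈ Finset.range (m2+1),
              (φ (idx k (rmax + i)) - φ (idx k rmax)) ^ 2 = (G (p + i) - G p)^2 := by
            intro i _
            rw [hidx, hidx,
              show (rmax + (i:ℤ) + (k:ℤ)).toNat = p + i from by omega,
              show (rmax + (k:ℤ)).toNat = p from by omega]
          rw [Finset.sum_congr rfl e1, Finset.sum_range_succ']
          have e2 : ∀ i ∈ Finset.range m2, (G (p + (i+1)) - G p)^2 = ψ2 (m2 - 1 - i) ^ 2 := by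
            intro i hi
            rw [Finset.mem_range] at hi
            simp only [hψ2_def, min_eq_left (by omega : m2 - 1 - i ≤ m2)]
            rw [show p + m2 - (m2 - 1 - i) = p + (i+1) from by omega]
          rw [Finset.sum_congr rfl e2, Finset.sum_range_reflect (fun i => ψ2 i ^ 2) m2]
          norm_num
        have hedge : ∑ i ∈ Finset.range m2, (ψ2 (i+1) - ψ2 i)^2
            = ∑ i ∈ Finset.range m2, h (p + i) := by
          have e1 : ∀ i ∈ Finset.range m2, (ψ2 (i+1) - ψ2 i)^2
              = (fun j => h (p + j)) (m2 - 1 - i) := by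
            intro i hi
            rw [Finset.mem_range] at hi
            simp only [hψ2_def, hh_def, min_eq_left (le_of_lt hi),
              min_eq_left (Nat.succ_le_of_lt hi)]
            rw [show p + (m2 - 1 - i) + 1 = p + m2 - i from by omega,
              show p + (m2 - 1 - i) = p + m2 - (i+1) from by omega]
            ring
          rw [Finset.sum_congr rfl e1, Finset.sum_range_reflect (fun j => h (p + j)) m2]
        have hdEq : dirEVZ ((k:ℤ) - rmax) = dirEVZ ((m2:ℕ) : ℤ) := by
          congr 1
          omega
        rw [hmass, hdEq, mul_comm]
        calc dirEVZ ((m2:ℕ):ℤ) * ∑ i ∈ Finset.range m2, ψ2 i ^ 2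
            ≤ ∑ i ∈ Finset.range m2, (ψ2 (i+1) - ψ2 i)^2 := hp2
          _ = ∑ i ∈ Finset.range m2, h (p + i) := hedge
      · have hempty : Finset.Icc rmax (k:ℤ) = ∅ := Finset.Icc_eq_empty (by omega)
        rw [hempty, Finset.sum_empty, zero_mul]
        apply Finset.sum_nonneg
        intro i _
        simp only [hh_def]
        positivity
    have hm1le : m1 ≤ p := by
      rw [hm1_def, hp_def]
      exact Int.toNat_le_toNat (by omega)
    have hm1le2 : m1 ≤ 2*k := by
      rw [hm1_def]
      omega
    have hpm2 : m2 = 0 ∨ p + m2 = 2*k := by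
      rw [hp_def, hm2_def]
      omega
    have hdisj : Disjoint (Finset.range m1) (Finset.Ico p (p + m2)) := by
      rw [Finset.disjoint_left]
      intro x hx hx2
      rw [Finset.mem_range] at hx
      rw [Finset.mem_Ico] at hx2
      omega
    have hsub : Finset.range m1 ∪ Finset.Ico p (p + m2) ⊆ Finset.range (2*k) := by
      intro x hx
      rw [Finset.mem_union, Finset.mem_range, Finset.mem_Ico] at hx
      rw [Finset.mem_range]
      rcases hx with hx | hx
      · omega
      · omega
    have hIco : ∑ i ∈ Finset.range m2, h (p + i) = ∑ i ∈ Finset.Ico p (p + m2), h i := by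
      rw [Finset.sum_Ico_eq_sum_range, show p + m2 - p = m2 from by omega]
    calc (1/2 - (1/2 - ∑ j ∈ Finset.Icc (-(k : ℤ)) rmin, (φ (idx k j) - φ (idx k rmin)) ^ 2)) *
        dirEVZ ((k : ℤ) + rmin) +
      (1/2 - (1/2 - ∑ j ∈ Finset.Icc rmax (k : ℤ), (φ (idx k j) - φ (idx k rmax)) ^ 2)) *
        dirEVZ ((k : ℤ) - rmax)
        = (∑ j ∈ Finset.Icc (-(k : ℤ)) rmin, (φ (idx k j) - φ (idx k rmin)) ^ 2) *
            dirEVZ ((k : ℤ) + rmin)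
          + (∑ j ∈ Finset.Icc rmax (k : ℤ), (φ (idx k j) - φ (idx k rmax)) ^ 2) *
            dirEVZ ((k : ℤ) - rmax) := by ring
      _ ≤ (∑ i ∈ Finset.range m1, h i) + ∑ i ∈ Finset.range m2, h (p + i) :=
          add_le_add bound1 bound2
      _ = (∑ i ∈ Finset.range m1, h i) + ∑ i ∈ Finset.Ico p (p + m2), h i := by rw [hIco]
      _ = ∑ i ∈ Finset.range m1 ∪ Finset.Ico p (p + m2), h i := (Finset.sum_union hdisj).symm
      _ ≤ ∑ i ∈ Finset.range (2*k), h i := by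
          apply Finset.sum_le_sum_of_subset_of_nonneg hsub
          intro i _ _
          simp only [hh_def]
          positivity
      _ = E := hE_def.symm
      _ ≤ lam := by linarith
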